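/- Let P(x_1,…,x_n) be a symmetric polynomial in n variables over a field of characteristic zero whose total degree is strictly less than n(n+1)/2. Then Σ_{I ⊆ {1,…,n}} P(λ_I) / ( ∏_{i<j} (λ_{i,I} + λ_{j,I}) · ∏_{i=1}^n λ_{i,I} ) = 0. -/
import Mathlib

open Finset

section Aux

/-- Sum of a finset of naturals is at least the sum of `0,...,card-1`. -/
lemma aux_sum_range_card_le (s : Finset ℕ) : ∑ i ∈ range s.card, i ≤ ∑ x ∈ s, x := by
  classical
  induction s using Finset.strongInduction with
  | _ s ih =>
    rcases s.eq_empty_or_nonempty with rfl | hne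
    · simp
    · have hmax := s.max'_mem hne
      set M := s.max' hne with hM
      have hsub : s ⊆ range (M + 1) := by
        intro x hx
        simp only [mem_range, Nat.lt_succ_iff]
        exact s.le_max' x hx
      have hcard : s.card ≤ M + 1 := by
        simpa using Finset.card_le_card hsub
      have herase : (s.erase M) ⊂ s := Finset.erase_ssubset hmax
      have ih' := ih (s.erase M) herase
      have hcard' : (s.erase M).card = s.card - 1 := Finset.card_erase_of_mem hmax
      have hsum : ∑ x ∈ s, x = M + ∑ x ∈ s.erase M, x :=
        (Finset.add_sum_erase s id hmax).symm
      have hpos : 1 ≤ s.card := Finset.card_pos.mpr hne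
      obtain ⟨c, hc⟩ : ∃ c, s.card = c + 1 := ⟨s.card - 1, by omega⟩
      rw [hc, Finset.sum_range_succ, hsum]
      rw [hcard', hc, Nat.add_sub_cancel] at ih'
      omega

/-- Vandermonde-type product changes sign under a transposition of the variables. -/
lemma aux_prod_swap {R : Type*} [CommRing R] {n : ℕ} (v : Fin n → R) {i j : Fin n}
    (hij : i ≠ j) :
    (∏ a : Fin n, ∏ b ∈ Ioi a, (v (Equiv.swap i j b) - v (Equiv.swap i j a))) =
      - ∏ a : Fin n, ∏ b ∈ Ioi a, (v b - v a) := by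
  have h1 : Matrix.vandermonde (fun k => v (Equiv.swap i j k)) =
      (Matrix.vandermonde v).submatrix (Equiv.swap i j) id := by
    ext a b
    simp [Matrix.vandermonde_apply, Matrix.submatrix_apply]
  calc (∏ a : Fin n, ∏ b ∈ Ioi a, (v (Equiv.swap i j b) - v (Equiv.swap i j a)))
      = (Matrix.vandermonde (fun k => v (Equiv.swap i j k))).det :=
        (Matrix.det_vandermonde _).symm
    _ = ((Matrix.vandermonde v).submatrix (Equiv.swap i j) id).det := by rw [h1]
    _ = (Equiv.Perm.sign (Equiv.swap i j) : R) * (Matrix.vandermonde v).det :=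
        by rw [Matrix.det_permute]
    _ = - ∏ a : Fin n, ∏ b ∈ Ioi a, (v b - v a) := by
        rw [Equiv.Perm.sign_swap hij, Matrix.det_vandermonde]
        simp

end Aux

/-- If the total degree of the symmetric polynomial `P` is strictly less than `n(n+1)/2`,
then the sum `Σ_{I ⊆ [n]} P(λ_I) / (∏_{i<j}(λ_{i,I}+λ_{j,I}) · ∏_i λ_{i,I})` vanishes. -/
theorem sum_over_subsets_eq_zero_of_totalDegree_lt
    {K : Type*} [Field K] [CharZero K] (n : ℕ) (hn : 1 ≤ n)
    (lam : Fin n → K) (h0 : ∀ i, lam i ≠ 0)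
    (hsq : ∀ i j, i ≠ j → lam i ^ 2 ≠ lam j ^ 2)
    (P : MvPolynomial (Fin n) K) (hP : P.IsSymmetric)
    (hdeg : P.totalDegree < n * (n + 1) / 2) :
    ∑ I : Finset (Fin n),
        MvPolynomial.eval (fun i => if i ∈ I then lam i else -lam i) P /
          ((∏ i : Fin n, ∏ j ∈ Ioi i,
              ((if i ∈ I then lam i else -lam i) + (if j ∈ I then lam j else -lam j))) *
            ∏ i : Fin n, (if i ∈ I then lam i else -lam i))
      = 0 := by
  classical
  -- the auxiliary polynomial G = P * V * E
  set V : MvPolynomial (Fin n) K :=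
    ∏ i : Fin n, ∏ j ∈ Ioi i, (MvPolynomial.X j - MvPolynomial.X i) with hV
  set E : MvPolynomial (Fin n) K := ∏ i : Fin n, MvPolynomial.X i with hE
  set G : MvPolynomial (Fin n) K := P * V * E with hG
  set D : K := (∏ i : Fin n, ∏ j ∈ Ioi i, (lam j ^ 2 - lam i ^ 2)) * ∏ i : Fin n, lam i ^ 2
    with hD
  -- Part 0 : nonvanishing of D
  have hDne : D ≠ 0 := by
    refine mul_ne_zero (Finset.prod_ne_zero_iff.mpr fun i _ =>
      Finset.prod_ne_zero_iff.mpr fun j hj => ?_)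
      (Finset.prod_ne_zero_iff.mpr fun i _ => pow_ne_zero 2 (h0 i))
    have hij : i ≠ j := ne_of_lt (mem_Ioi.mp hj)
    exact sub_ne_zero_of_ne (fun h => hsq i j hij h.symm)
  -- Part 1 : antisymmetry of G under transpositions
  have hswapG : ∀ (i j : Fin n), i ≠ j →
      MvPolynomial.rename (Equiv.swap i j) G = -G := by
    intro i j hij
    have hV' : MvPolynomial.rename (Equiv.swap i j) V = -V := by
      rw [hV]
      simp only [map_prod, map_sub, MvPolynomial.rename_X]
      exact aux_prod_swap MvPolynomial.X hij
    have hE' : MvPolynomial.rename (Equiv.swap i j) E = E := by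
      rw [hE]
      simp only [map_prod, MvPolynomial.rename_X]
      exact Equiv.prod_comp (Equiv.swap i j) MvPolynomial.X
    rw [hG, map_mul, map_mul, hP (Equiv.swap i j), hV', hE']
    ring
  -- coefficients with a repeated exponent vanish
  have hcoeff_eq : ∀ (d : Fin n →₀ ℕ) (i j : Fin n), i ≠ j → d i = d j →
      MvPolynomial.coeff d G = 0 := by
    intro d i j hij hd
    have hmap : Finsupp.mapDomain (Equiv.swap i j) d = d := by
      rw [← Finsupp.equivMapDomain_eq_mapDomain]
      ext k
      simp only [Finsupp.equivMapDomain_apply, Equiv.symm_swap]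
      rcases Equiv.swap_apply_def i j k with _
      by_cases hk1 : k = i
      · simp [hk1, Equiv.swap_apply_left, hd.symm]
      · by_cases hk2 : k = j
        · simp [hk2, Equiv.swap_apply_right, hd]
        · rw [Equiv.swap_apply_of_ne_of_ne hk1 hk2]
    have h1 := MvPolynomial.coeff_rename_mapDomain (Equiv.swap i j)
      (Equiv.injective _) G d
    rw [hmap, hswapG i j hij] at h1
    have h2 : -MvPolynomial.coeff d G = MvPolynomial.coeff d G := by
      simpa using h1
    linear_combination (-(1 : K) / 2) * h2
  -- all exponents of monomials of G are positive
  have hpos : ∀ d ∈ G.support, ∀ k, 1 ≤ d k := by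
    intro d hd k
    by_contra hcon
    have hk : d k = 0 := by omega
    have hGfact : G = (P * V * ∏ i ∈ Finset.univ.erase k, MvPolynomial.X i) *
        MvPolynomial.X k := by
      rw [hG, hE, ← Finset.mul_prod_erase Finset.univ _ (mem_univ k)]
      ring
    have hc := MvPolynomial.coeff_mul_X' d k
      (P * V * ∏ i ∈ Finset.univ.erase k, MvPolynomial.X i)
    rw [← hGfact] at hc
    rw [MvPolynomial.mem_support_iff] at hd
    apply hd
    rw [hc, if_neg]
    simp [Finsupp.mem_support_iff, hk]
  -- the Gauss number
  set r : ℕ := ∑ i ∈ range n, i with hr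
  have hr2 : r * 2 = n * (n - 1) := Finset.sum_range_id_mul_two n
  have hnn : n * (n + 1) = 2 * r + 2 * n := by
    obtain ⟨m, rfl⟩ : ∃ m, n = m + 1 := ⟨n - 1, by omega⟩
    have : (m + 1) * (m + 1 - 1) = (m + 1) * m := by simp
    rw [this] at hr2
    ring_nf
    ring_nf at hr2
    omega
  -- degree bound for G
  have hVdeg : V.totalDegree ≤ r := by
    have h1 : V.totalDegree ≤ ∑ i : Fin n,
        (∏ j ∈ Ioi i, (MvPolynomial.X j - MvPolynomial.X i :
          MvPolynomial (Fin n) K)).totalDegree := by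
      rw [hV]; exact MvPolynomial.totalDegree_finset_prod _ _
    have h2 : ∀ i : Fin n, (∏ j ∈ Ioi i, (MvPolynomial.X j - MvPolynomial.X i :
        MvPolynomial (Fin n) K)).totalDegree ≤ (Ioi i).card := by
      intro i
      refine le_trans (MvPolynomial.totalDegree_finset_prod _ _) ?_
      rw [Finset.card_eq_sum_ones]
      refine Finset.sum_le_sum fun j _ => ?_
      refine le_trans (MvPolynomial.totalDegree_sub _ _) ?_
      simp [MvPolynomial.totalDegree_X]
    have h3 : ∑ i : Fin n, (Ioi i).card = r := by
      have : ∀ i : Fin n, (Ioi i).card = n - 1 - (i : ℕ) := fun i => Fin.card_Ioi i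
      rw [Finset.sum_congr rfl fun i _ => this i, Fin.sum_univ_eq_sum_range
        (fun k => n - 1 - k) n, hr]
      calc ∑ k ∈ range n, (n - 1 - k) = ∑ k ∈ range n, id (n - 1 - k) := rfl
        _ = ∑ k ∈ range n, id k := Finset.sum_range_reflect id n
        _ = ∑ k ∈ range n, k := rfl
    exact le_trans h1 (le_trans (Finset.sum_le_sum fun i _ => h2 i) h3.le)
  have hEdeg : E.totalDegree ≤ n := by
    refine le_trans (MvPolynomial.totalDegree_finset_prod _ _) ?_
    simp [MvPolynomial.totalDegree_X]
  have hGdeg : G.totalDegree ≤ P.totalDegree + r + n := by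
    rw [hG]
    refine le_trans (MvPolynomial.totalDegree_mul _ _) ?_
    refine add_le_add (le_trans (MvPolynomial.totalDegree_mul _ _) ?_) hEdeg
    exact add_le_add le_rfl hVdeg
  -- every monomial of G has an odd exponent
  have hkey : ∀ d ∈ G.support, ∃ k, Odd (d k) := by
    intro d hd
    by_contra hcon
    push_neg at hcon
    have hev : ∀ k, Even (d k) := fun k => Nat.not_odd_iff_even.mp (hcon k)
    set g : Fin n → ℕ := fun k => d k / 2 with hg
    have hdg : ∀ k, d k = 2 * g k := by
      intro k
      obtain ⟨c, hc⟩ := hev k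
      simp only [hg]
      omega
    have hdinj : ∀ a b : Fin n, a ≠ b → d a ≠ d b := by
      intro a b hab he
      exact (MvPolynomial.mem_support_iff.mp hd) (hcoeff_eq d a b hab he)
    have hginj : Function.Injective g := by
      intro a b hab
      by_contra hne
      exact hdinj a b hne (by rw [hdg a, hdg b, hab])
    have hg1 : ∀ k, 1 ≤ g k := by
      intro k
      have h1 := hpos d hd k
      have h2 := hdg k
      omega
    set S : Finset ℕ := Finset.univ.image g with hS
    have hcardS : S.card = n := by
      rw [hS, Finset.card_image_of_injective _ hginj, card_univ, Fintype.card_fin]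
    have hsumS : ∑ x ∈ S, x = ∑ k : Fin n, g k := by
      rw [hS]
      exact Finset.sum_image fun x _ y _ h => hginj h
    have hS1 : ∀ x ∈ S, 1 ≤ x := by
      intro x hx
      obtain ⟨k, _, rfl⟩ := Finset.mem_image.mp hx
      exact hg1 k
    set T : Finset ℕ := S.image (fun x => x - 1) with hT
    have hTinj : ∀ x ∈ S, ∀ y ∈ S, x - 1 = y - 1 → x = y := by
      intro x hx y hy h
      have := hS1 x hx; have := hS1 y hy; omega
    have hcardT : T.card = n := by rw [hT, Finset.card_image_of_injOn hTinj, hcardS]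
    have hsumT : ∑ x ∈ T, x = (∑ x ∈ S, x) - n := by
      rw [hT, Finset.sum_image hTinj]
      have : ∑ x ∈ S, x = ∑ x ∈ S, ((x - 1) + 1) :=
        Finset.sum_congr rfl fun x hx => by have := hS1 x hx; omega
      rw [this, Finset.sum_add_distrib, Finset.sum_const, hcardS]
      simp
    have hrT : r ≤ ∑ x ∈ T, x := by
      have := aux_sum_range_card_le T
      rwa [hcardT] at this
    have hSn : n ≤ ∑ x ∈ S, x := by
      calc n = ∑ _x ∈ S, 1 := by rw [Finset.sum_const, hcardS, smul_eq_mul, mul_one]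
        _ ≤ ∑ x ∈ S, x := Finset.sum_le_sum hS1
    have hlow : 2 * r + 2 * n ≤ ∑ k : Fin n, d k := by
      have h1 : ∑ k : Fin n, d k = 2 * ∑ k : Fin n, g k := by
        rw [Finset.mul_sum]
        exact Finset.sum_congr rfl fun k _ => hdg k
      omega
    have hup : ∑ k : Fin n, d k ≤ P.totalDegree + r + n := by
      have h1 : (d.sum fun _ e => e) ≤ G.totalDegree := MvPolynomial.le_totalDegree hd
      have h2 : (d.sum fun _ e => e) = ∑ k : Fin n, d k :=
        Finsupp.sum_fintype _ _ fun _ => rfl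
      omega
    rw [hnn] at hdeg
    omega
  -- Part 2 : sum of evaluations of G over all sign patterns vanishes
  have hsumG : ∑ I : Finset (Fin n),
      MvPolynomial.eval (fun i => if i ∈ I then lam i else -lam i) G = 0 := by
    have hev : ∀ I : Finset (Fin n),
        MvPolynomial.eval (fun i => if i ∈ I then lam i else -lam i) G =
          ∑ d ∈ G.support, MvPolynomial.coeff d G *
            ∏ i : Fin n, (if i ∈ I then lam i else -lam i) ^ d i := fun I =>
      MvPolynomial.eval_eq' _ _
    rw [Finset.sum_congr rfl fun I _ => hev I, Finset.sum_comm]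
    refine Finset.sum_eq_zero fun d hd => ?_
    obtain ⟨k, hk⟩ := hkey d hd
    rw [← Finset.mul_sum]
    have hinner : ∑ I : Finset (Fin n),
        ∏ i : Fin n, (if i ∈ I then lam i else -lam i) ^ d i =
          ∏ i : Fin n, (lam i ^ d i + (-lam i) ^ d i) := by
      rw [Finset.prod_add]
      rw [← Finset.powerset_univ]
      refine Finset.sum_congr rfl fun I _ => ?_
      have hpw := Finset.prod_piecewise Finset.univ I
        (fun i => lam i ^ d i) (fun i => (-lam i) ^ d i)
      rw [Finset.univ_inter] at hpw
      rw [← hpw]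
      exact Finset.prod_congr rfl fun i _ => by
        by_cases hi : i ∈ I <;> simp [Finset.piecewise, hi]
    rw [hinner]
    have hzero : lam k ^ d k + (-lam k) ^ d k = 0 := by
      rw [Odd.neg_pow hk]; ring
    rw [Finset.prod_eq_zero (Finset.mem_univ k) hzero, mul_zero]
  -- Part 3 : each term rewritten over the common denominator D
  have hkeyterm : ∀ v : Fin n → K, (∀ i, v i ^ 2 = lam i ^ 2) → (∀ i, v i ≠ 0) →
      MvPolynomial.eval v P /
        ((∏ i : Fin n, ∏ j ∈ Ioi i, (v i + v j)) * ∏ i : Fin n, v i) =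
        MvPolynomial.eval v G / D := by
    intro v hv2 hvne
    have hAne : (∏ i : Fin n, ∏ j ∈ Ioi i, (v i + v j)) ≠ 0 := by
      refine Finset.prod_ne_zero_iff.mpr fun i _ =>
        Finset.prod_ne_zero_iff.mpr fun j hj => ?_
      intro hzero
      have hij : i ≠ j := ne_of_lt (mem_Ioi.mp hj)
      apply hsq i j hij
      have hvi : v i = -v j := eq_neg_of_add_eq_zero_left hzero
      calc lam i ^ 2 = v i ^ 2 := (hv2 i).symm
        _ = (-v j) ^ 2 := by rw [hvi]
        _ = v j ^ 2 := by ring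
        _ = lam j ^ 2 := hv2 j
    have hBne : (∏ i : Fin n, v i) ≠ 0 :=
      Finset.prod_ne_zero_iff.mpr fun i _ => hvne i
    rw [div_eq_div_iff (mul_ne_zero hAne hBne) hDne]
    have hevalG : MvPolynomial.eval v G = MvPolynomial.eval v P *
        (∏ i : Fin n, ∏ j ∈ Ioi i, (v j - v i)) * ∏ i : Fin n, v i := by
      rw [hG, hV, hE]
      simp only [map_mul, map_prod, map_sub, MvPolynomial.eval_X]
    have hcomb : (∏ i : Fin n, ∏ j ∈ Ioi i, (v i + v j)) *
        (∏ i : Fin n, ∏ j ∈ Ioi i, (v j - v i)) =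
        ∏ i : Fin n, ∏ j ∈ Ioi i, (lam j ^ 2 - lam i ^ 2) := by
      rw [← Finset.prod_mul_distrib]
      refine Finset.prod_congr rfl fun i _ => ?_
      rw [← Finset.prod_mul_distrib]
      refine Finset.prod_congr rfl fun j _ => ?_
      linear_combination hv2 j - hv2 i
    have hBB : (∏ i : Fin n, v i) * (∏ i : Fin n, v i) = ∏ i : Fin n, lam i ^ 2 := by
      rw [← Finset.prod_mul_distrib]
      refine Finset.prod_congr rfl fun i _ => ?_
      linear_combination hv2 i
    rw [hevalG, hD, ← hcomb, ← hBB]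
    ring
  have hv2' : ∀ (I : Finset (Fin n)) (i : Fin n),
      (if i ∈ I then lam i else -lam i) ^ 2 = lam i ^ 2 := by
    intro I i; by_cases hi : i ∈ I <;> simp [hi]
  have hvne' : ∀ (I : Finset (Fin n)) (i : Fin n),
      (if i ∈ I then lam i else -lam i) ≠ 0 := by
    intro I i; by_cases hi : i ∈ I <;> simp [hi, h0 i]
  refine Eq.trans (Finset.sum_congr rfl fun I _ => hkeyterm
    (fun i => if i ∈ I then lam i else -lam i) (hv2' I) (hvne' I)) ?_
  rw [← Finset.sum_div, hsumG, zero_div]
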